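/- Let n ≥ 1 and d ≥ 2 be integers, let μ_d ⊂ C be the set of d-th roots of unity, and let F = ∏_{(ε_1,...,ε_n) ∈ μ_d^n} (x_1 + ε_1 x_2 + ε_2 x_3 + ... + ε_n x_{n+1}) in C[x_1,...,x_{n+1}] (a homogeneous polynomial of degree d^n). Then F lies in the ideal (x_1^d, x_2^d, ..., x_{n+1}^d)^{d^{n−1}}; equivalently, F = 0 in the quotient ring C[x_1,...,x_{n+1}]/(x_1^d,...,x_{n+1}^d)^{d^{n−1}}. -/

import Mathlib

open MvPolynomial

/-- Products of powers of ideal elements lie in the corresponding ideal power. -/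
lemma aux_prod_pow_mem_pow {R : Type*} [CommRing R] (I : Ideal R) {ι : Type*}
    [DecidableEq ι] (s : Finset ι) (a : ι → R) (k : ι → ℕ) (h : ∀ i ∈ s, a i ∈ I) :
    (∏ i ∈ s, a i ^ k i) ∈ I ^ (∑ i ∈ s, k i) := by
  induction s using Finset.induction with
  | empty => simp
  | @insert x s' hx ih =>
    rw [Finset.prod_insert hx, Finset.sum_insert hx, pow_add]
    exact Ideal.mul_mem_mul (Ideal.pow_mem_pow (h x (Finset.mem_insert_self _ _)) _)
      (ih fun i hi => h i (Finset.mem_insert_of_mem hi))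

/-- The coefficient of a "diagonal scaling" of a multivariate polynomial. -/
lemma aux_coeff_aeval_diag {σ : Type*} [Fintype σ] [DecidableEq σ] (c : σ → ℂ)
    (p : MvPolynomial σ ℂ) (m : σ →₀ ℕ) :
    coeff m (aeval (fun j => C (c j) * X j : σ → MvPolynomial σ ℂ) p)
      = (∏ j, c j ^ m j) * coeff m p := by
  induction p using MvPolynomial.induction_on' with
  | add p q hp hq => rw [map_add, coeff_add, hp, hq, coeff_add, mul_add]
  | monomial m' a =>
    rw [aeval_monomial]
    have h1 : (m'.prod fun j k => (C (c j) * X j : MvPolynomial σ ℂ) ^ k)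
        = C (m'.prod fun j k => c j ^ k) * (m'.prod fun j k => (X j : MvPolynomial σ ℂ) ^ k) := by
      rw [Finsupp.prod, Finsupp.prod, Finsupp.prod, map_prod, ← Finset.prod_mul_distrib]
      exact Finset.prod_congr rfl fun j _ => by rw [mul_pow, map_pow]
    rw [h1, algebraMap_eq, ← mul_assoc, ← map_mul, ← monomial_eq, coeff_monomial, coeff_monomial]
    split_ifs with h
    · subst h
      rw [Finsupp.prod_pow]
      ring
    · rw [mul_zero]

theorem stmt_4 (n d : ℕ) (hn : 1 ≤ n) (hd : 2 ≤ d) :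
    (∏ ε ∈ Fintype.piFinset (fun _ : Fin n => Polynomial.nthRootsFinset d (1 : ℂ)),
        ((X 0 : MvPolynomial (Fin (n + 1)) ℂ) + ∑ i : Fin n, C (ε i) * X i.succ))
      ∈ (Ideal.span (Set.range fun i : Fin (n + 1) =>
          (X i : MvPolynomial (Fin (n + 1)) ℂ) ^ d)) ^ (d ^ (n - 1)) := by
  classical
  have hd0 : 0 < d := by omega
  set F : MvPolynomial (Fin (n + 1)) ℂ :=
    ∏ ε ∈ Fintype.piFinset (fun _ : Fin n => Polynomial.nthRootsFinset d (1 : ℂ)),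
      ((X 0 : MvPolynomial (Fin (n + 1)) ℂ) + ∑ i : Fin n, C (ε i) * X i.succ) with hF
  set I : Ideal (MvPolynomial (Fin (n + 1)) ℂ) :=
    Ideal.span (Set.range fun i : Fin (n + 1) =>
      (X i : MvPolynomial (Fin (n + 1)) ℂ) ^ d) with hI
  -- a primitive d-th root of unity
  obtain ⟨ζ, hζ⟩ : ∃ ζ : ℂ, IsPrimitiveRoot ζ d :=
    ⟨_, Complex.isPrimitiveRoot_exp d (by omega)⟩
  have hζ0 : ζ ≠ 0 := hζ.ne_zero (by omega)
  have hζmem : ζ ∈ Polynomial.nthRootsFinset d (1 : ℂ) :=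
    (Polynomial.mem_nthRootsFinset hd0 1).2 hζ.pow_eq_one
  -- homogeneity of F
  have hhom : F.IsHomogeneous (d ^ n) := by
    have h := MvPolynomial.IsHomogeneous.prod
      (Fintype.piFinset (fun _ : Fin n => Polynomial.nthRootsFinset d (1 : ℂ)))
      (fun ε => (X 0 : MvPolynomial (Fin (n + 1)) ℂ) + ∑ i : Fin n, C (ε i) * X i.succ)
      (fun _ => 1) (fun ε _ => (isHomogeneous_X _ _).add
        (MvPolynomial.IsHomogeneous.sum _ _ _ fun i _ => (isHomogeneous_X _ _).C_mul _))
    have hcard : (Fintype.piFinset (fun _ : Fin n => Polynomial.nthRootsFinset d (1 : ℂ))).card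
        = d ^ n := by
      simp [Fintype.card_piFinset, hζ.card_nthRootsFinset]
    rwa [Finset.sum_const, hcard, smul_eq_mul, mul_one] at h
  -- invariance under scaling a variable `Fin.succ i0` by ζ
  have hkey : ∀ (m : Fin (n + 1) →₀ ℕ), coeff m F ≠ 0 → ∀ i0 : Fin n, d ∣ m i0.succ := by
    intro m hm i0
    set c : Fin (n + 1) → ℂ := fun j => if j = i0.succ then ζ else 1 with hc
    have hinv : aeval (fun j => C (c j) * X j :
          Fin (n + 1) → MvPolynomial (Fin (n + 1)) ℂ) F = F := by
      rw [hF, map_prod]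
      refine Finset.prod_nbij' (fun ε => fun i => if i = i0 then ζ * ε i else ε i)
        (fun ε => fun i => if i = i0 then ζ⁻¹ * ε i else ε i) ?_ ?_ ?_ ?_ ?_
      · intro ε hε
        rw [Fintype.mem_piFinset] at hε ⊢
        intro i
        by_cases hi : i = i0 <;> simp only [hi, if_pos, if_neg, if_true]
        · rw [← mul_one (1 : ℂ)]
          exact Polynomial.mul_mem_nthRootsFinset hζmem (hε i0)
        · simpa [hi] using hε i
      · intro ε hε
        rw [Fintype.mem_piFinset] at hε ⊢
        intro i
        by_cases hi : i = i0 <;> simp only [hi, if_pos, if_neg, if_true]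
        · rw [← mul_one (1 : ℂ)]
          refine Polynomial.mul_mem_nthRootsFinset ?_ (hε i0)
          rw [Polynomial.mem_nthRootsFinset hd0, inv_pow, hζ.pow_eq_one, inv_one]
        · simpa [hi] using hε i
      · intro ε _
        funext i
        by_cases hi : i = i0 <;> simp [hi]
        rw [← mul_assoc, inv_mul_cancel₀ hζ0, one_mul]
      · intro ε _
        funext i
        by_cases hi : i = i0 <;> simp [hi]
        rw [← mul_assoc, mul_inv_cancel₀ hζ0, one_mul]
      · intro ε _
        rw [map_add, map_sum]
        congr 1
        · simp only [aeval_X, map_mul, aeval_C, algebraMap_eq, hc]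
          rw [if_neg (fun h => Fin.succ_ne_zero i0 h.symm), map_one, one_mul]
        · refine Finset.sum_congr rfl fun i _ => ?_
          simp only [map_mul, aeval_C, aeval_X, algebraMap_eq]
          have hcj : c i.succ = if i = i0 then ζ else 1 := by
            simp [hc, Fin.succ_inj]
          rw [hcj]
          by_cases hi : i = i0
          · rw [if_pos hi, if_pos hi, ← mul_assoc, ← map_mul, mul_comm ζ, map_mul, mul_assoc]
          · rw [if_neg hi, if_neg hi, map_one, one_mul]
    have hco := aux_coeff_aeval_diag c F m
    rw [hinv] at hco
    have hprod : (∏ j, c j ^ m j) = ζ ^ m i0.succ := by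
      rw [Finset.prod_congr rfl (fun j _ => show c j ^ m j
          = if j = i0.succ then ζ ^ m j else 1 by simp only [hc]; split_ifs <;> simp)]
      rw [Finset.prod_ite_eq' Finset.univ i0.succ (fun j => ζ ^ m j)]
      simp
    rw [hprod] at hco
    have h2 : (ζ ^ m i0.succ - 1) * coeff m F = 0 := by
      rw [sub_mul, one_mul, ← hco, sub_self]
    rcases mul_eq_zero.1 h2 with h3 | h3
    · exact (hζ.pow_eq_one_iff_dvd _).1 (by linear_combination h3)
    · exact absurd h3 hm
  -- assemble
  rw [F.as_sum]
  refine Ideal.sum_mem _ fun m hm => ?_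
  have hcm : coeff m F ≠ 0 := mem_support_iff.1 hm
  -- degrees sum to d ^ n
  have hsum : ∑ j, m j = d ^ n := by
    have hw := hhom hcm
    rw [Pi.one_def, ← Finsupp.degree_eq_weight_one] at hw
    rw [← hw, Finsupp.degree_apply]
    exact (Finset.sum_subset (Finset.subset_univ _)
      (fun j _ hj => Finsupp.notMem_support_iff.1 hj)).symm
  -- all exponents divisible by d
  have hdvd : ∀ j : Fin (n + 1), d ∣ m j := by
    have hS : d ∣ ∑ i : Fin n, m i.succ :=
      Finset.dvd_sum fun i _ => hkey m hcm i
    intro j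
    refine Fin.cases ?_ (fun i => hkey m hcm i) j
    have hdn : d ∣ m 0 + ∑ i : Fin n, m i.succ := by
      rw [← Fin.sum_univ_succ (fun j => m j), hsum]
      exact dvd_pow_self d (by omega)
    rw [add_comm] at hdn
    exact (Nat.dvd_add_right hS).1 hdn
  rw [monomial_eq]
  refine Ideal.mul_mem_left _ _ ?_
  have hrw : (m.prod fun i k => (X i : MvPolynomial (Fin (n + 1)) ℂ) ^ k)
      = ∏ j, ((X j : MvPolynomial (Fin (n + 1)) ℂ) ^ d) ^ (m j / d) := by
    rw [Finsupp.prod_pow]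
    exact Finset.prod_congr rfl fun j _ => by rw [← pow_mul, Nat.mul_div_cancel' (hdvd j)]
  have hsum2 : ∑ j, m j / d = d ^ (n - 1) := by
    refine Nat.eq_of_mul_eq_mul_left hd0 ?_
    rw [Finset.mul_sum, Finset.sum_congr rfl fun j _ => Nat.mul_div_cancel' (hdvd j), hsum]
    rw [← pow_succ']
    congr 1
    omega
  rw [hrw, ← hsum2]
  exact aux_prod_pow_mem_pow I Finset.univ _ _
    fun j _ => Ideal.subset_span ⟨j, rfl⟩
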